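/- Let q ≥ 0 and let (x_0, x_1) be a state with 0 ≤ x_0 ≤ 1 and wt_q(x_0, x_1) ≥ 2^q. Then Paul has a winning strategy in the q-round pathological liar game with 1 lie and initial state (x_0, x_1). -/

import Mathlib

/-- The `q`-weight of a 1-lie state `(x_0, x_1)`: `wt_q(x_0,x_1) = x_0(q+1) + x_1`. -/
def wt1 (q : ℕ) (x : ℕ × ℕ) : ℕ := x.1 * (q + 1) + x.2

/-- A question `(a_0, a_1)` is legal for state `(x_0, x_1)` if `0 ≤ a_i ≤ x_i`. -/
def Legal1 (x a : ℕ × ℕ) : Prop := a.1 ≤ x.1 ∧ a.2 ≤ x.2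

/-- The "Yes" successor: `Y((x_0,x_1),(a_0,a_1)) = (a_0, a_1 + x_0 - a_0)`. -/
def Y1 (x a : ℕ × ℕ) : ℕ × ℕ := (a.1, a.2 + (x.1 - a.1))

/-- The "No" successor: `N((x_0,x_1),(a_0,a_1)) = (x_0 - a_0, x_1 - a_1 + a_0)`. -/
def N1 (x a : ℕ × ℕ) : ℕ × ℕ := (x.1 - a.1, (x.2 - a.2) + a.1)

/-- Carole wins the `q`-round 1-lie pathological liar game from state `x`. -/
def CaroleWins1 : ℕ → ℕ × ℕ → Prop
  | 0, x => x = (0, 0)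
  | q + 1, x => ∀ a, Legal1 x a → CaroleWins1 q (Y1 x a) ∨ CaroleWins1 q (N1 x a)

/-- Paul wins the `q`-round 1-lie pathological liar game from state `x`. -/
def PaulWins1 : ℕ → ℕ × ℕ → Prop
  | 0, x => 1 ≤ x.1 + x.2
  | q + 1, x => ∃ a, Legal1 x a ∧ PaulWins1 q (Y1 x a) ∧ PaulWins1 q (N1 x a)

/-- If `x_0 ≤ 1` and `wt_q(x_0, x_1) ≥ 2^q`, then Paul wins the `q`-round 1-lie
pathological liar game with initial state `(x_0, x_1)`. -/
theorem paul_wins_small_msb (q : ℕ) (x : ℕ × ℕ) (hx0 : x.1 ≤ 1)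
    (hw : 2 ^ q ≤ wt1 q x) : PaulWins1 q x := by
  induction q generalizing x with
  | zero =>
    simp only [wt1, PaulWins1] at *
    omega
  | succ q ih =>
    obtain ⟨x0, x1⟩ := x
    simp only [wt1] at hw
    have hp : q < 2 ^ q := Nat.lt_two_pow_self (n := q)
    have h2 : 2 ^ (q + 1) = 2 * 2 ^ q := by ring
    simp only at hx0 hw
    interval_cases x0
    · -- x0 = 0, ask (0, x1/2)
      refine ⟨(0, x1 / 2), ⟨le_refl 0, Nat.div_le_self _ _⟩, ?_, ?_⟩
      · apply ih _ (by simp [Y1]) ; simp [Y1, wt1]; omega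
      · apply ih _ (by simp [N1]) ; simp [N1, wt1]; omega
    · -- x0 = 1, ask (1, 2^q - (q+1))
      refine ⟨(1, 2 ^ q - (q + 1)), ⟨le_refl 1, by omega⟩, ?_, ?_⟩
      · apply ih _ (by simp [Y1]) ; simp [Y1, wt1]; omega
      · apply ih _ (by simp [N1]) ; simp [N1, wt1]; omega
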